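/- Let C be a constant weight binary linear code and A = A_C(Λ) a code algebra. Let α, β ∈ C* with β ≠ α, α^c, and suppose a_α := a_{i,α} is independent of i ∈ supp(α), a_β := a_{i,β} is independent of i ∈ supp(β), a_β = a_{α+β}, and b_{α,β} = b_{α,α+β}. Let e = λ·t_α + μ·e^α with λ = 1/(2·a_α·|α|). Then e^β − e^{α+β} is an eigenvector of ad_e with eigenvalue a_β/(4a_α) − μ·b_{α,β}, and e^β + e^{α+β} is an eigenvector of ad_e with eigenvalue a_β/(4a_α) + μ·b_{α,β}. -/

import Mathlib

abbrev Word (n : ℕ) := Fin n → ZMod 2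

def wsupp {n : ℕ} (α : Word n) : Finset (Fin n) :=
  Finset.univ.filter fun i => α i = 1

def dotW {n : ℕ} (u v : Word n) : ZMod 2 := ∑ i, u i * v i

def IsStar {n : ℕ} (C : Submodule (ZMod 2) (Word n)) (α : Word n) : Prop :=
  α ∈ C ∧ α ≠ 0 ∧ α ≠ 1

structure CodeAlgebra (F : Type*) [Field F] {n : ℕ} (C : Submodule (ZMod 2) (Word n))
    (a : Fin n → Word n → F) (b : Word n → Word n → F) (c : Fin n → Word n → F)
    (A : Type*) [AddCommGroup A] [Module F A] where
  mul : A →ₗ[F] A →ₗ[F] A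
  t : Fin n → A
  e : Word n → A
  bas : Module.Basis (Fin n ⊕ {α : Word n // IsStar C α}) F A
  bas_t : ∀ i, bas (Sum.inl i) = t i
  bas_e : ∀ α, bas (Sum.inr α) = e α.1
  mul_comm : ∀ x y : A, mul x y = mul y x
  t_mul_t : ∀ i j, mul (t i) (t j) = if i = j then t i else 0
  t_mul_e : ∀ (i : Fin n) (α : Word n), IsStar C α →
    mul (t i) (e α) = if α i = 1 then a i α • e α else 0
  e_mul_e : ∀ (α β : Word n), IsStar C α → IsStar C β → α ≠ β → α + β ≠ 1 →
    mul (e α) (e β) = b α β • e (α + β)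
  e_mul_self : ∀ (α : Word n), IsStar C α →
    mul (e α) (e α) = ∑ i ∈ wsupp α, c i α • t i
  e_mul_compl : ∀ (α β : Word n), IsStar C α → IsStar C β → α + β = 1 →
    mul (e α) (e β) = 0

def Nondeg {F : Type*} [Field F] {n : ℕ} (C : Submodule (ZMod 2) (Word n))
    (a : Fin n → Word n → F) (b : Word n → Word n → F) (c : Fin n → Word n → F) : Prop :=
  (∀ i : Fin n, ∃ α ∈ C, α i = 1) ∧ (∃ α, IsStar C α) ∧
  (∀ i α, IsStar C α → α i = 1 → a i α ≠ 0) ∧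
  (∀ α β, IsStar C α → IsStar C β → α ≠ β → α + β ≠ 1 → b α β ≠ 0) ∧
  (∀ i α, IsStar C α → α i = 1 → c i α ≠ 0)


/-- Lemma 4.8: paired eigenvectors of the small idempotent in a constant weight code. -/
theorem small_idempotent_paired_eigenvectors {F : Type*} [Field F] {n : ℕ}
    {C : Submodule (ZMod 2) (Word n)}
    {a : Fin n → Word n → F} {b : Word n → Word n → F} {c : Fin n → Word n → F}
    {A : Type*} [AddCommGroup A] [Module F A]
    (CA : CodeAlgebra F C a b c A)
    (hcw : ∃ d : ℕ, ∀ γ, IsStar C γ → (wsupp γ).card = d)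
    (α β : Word n) (hα : IsStar C α) (hβ : IsStar C β)
    (hne : β ≠ α) (hnc : α + β ≠ 1)
    (aα aβ : F)
    (haα : ∀ i, α i = 1 → a i α = aα)
    (haβ : ∀ i, β i = 1 → a i β = aβ)
    (haαβ : ∀ i, (α + β) i = 1 → a i (α + β) = aβ)
    (hbb : b α β = b α (α + β))
    (h2 : (2 : F) * aα * ((wsupp α).card : F) ≠ 0)
    (lam mu : F) (hlam : lam = ((2 : F) * aα * ((wsupp α).card : F))⁻¹)
    (s : A) (hs : s = lam • (∑ i ∈ wsupp α, CA.t i) + mu • CA.e α)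
    (f : Module.End F A) (hf : f = CA.mul s) :
    f.HasEigenvector (aβ / (4 * aα) - mu * b α β) (CA.e β - CA.e (α + β)) ∧
    f.HasEigenvector (aβ / (4 * aα) + mu * b α β) (CA.e β + CA.e (α + β)) := by

  -- basic facts about ZMod 2
  have hz : ∀ x : ZMod 2, x + x = 0 := by decide
  have haddself : α + α = 0 := by funext i; exact hz (α i)
  have hαβ0 : α + β ≠ 0 := by
    intro h
    apply hne
    funext i
    have := congrFun h i
    simp only [Pi.add_apply, Pi.zero_apply] at this
    revert this
    generalize α i = x; generalize β i = y
    revert x y; decide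
  have hαβstar : IsStar C (α + β) := ⟨C.add_mem hα.1 hβ.1, hαβ0, hnc⟩
  have hβαβ : β ≠ α + β := by
    intro h
    apply hα.2.1
    funext i
    have := congrFun h i
    simp only [Pi.add_apply, Pi.zero_apply] at this ⊢
    revert this
    generalize α i = x; generalize β i = y
    revert x y; decide
  have hααβ : α ≠ α + β := by
    intro h
    apply hβ.2.1
    funext i
    have := congrFun h i
    simp only [Pi.add_apply, Pi.zero_apply] at this ⊢
    revert this
    generalize α i = x; generalize β i = y
    revert x y; decide
  have hsumαβ : α + (α + β) = β := by rw [← add_assoc, haddself, zero_add]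
  obtain ⟨d, hd⟩ := hcw
  have hdα := hd α hα
  have hdβ := hd β hβ
  have hdαβ := hd (α + β) hαβstar
  -- cardinality facts
  set k := (wsupp α ∩ wsupp β).card with hkdef
  have hset1 : wsupp (α + β) = (wsupp α ∪ wsupp β) \ (wsupp α ∩ wsupp β) := by
    ext i
    simp only [wsupp, Finset.mem_filter, Finset.mem_univ, true_and, Finset.mem_sdiff,
      Finset.mem_union, Finset.mem_inter, Pi.add_apply]
    generalize α i = x; generalize β i = y
    revert x y; decide
  have hset2 : wsupp α ∩ wsupp (α + β) = wsupp α \ wsupp β := by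
    ext i
    simp only [wsupp, Finset.mem_filter, Finset.mem_univ, true_and, Finset.mem_sdiff,
      Finset.mem_inter, Pi.add_apply]
    generalize α i = x; generalize β i = y
    revert x y; decide
  have hcard1 : (wsupp α ∪ wsupp β).card + k = d + d := by
    rw [hkdef, Finset.card_union_add_card_inter, hdα, hdβ]
  have hsub : wsupp α ∩ wsupp β ⊆ wsupp α ∪ wsupp β :=
    Finset.inter_subset_left.trans Finset.subset_union_left
  have hcard2 : d = (wsupp α ∪ wsupp β).card - k := by
    rw [← hdαβ, hset1, Finset.card_sdiff_of_subset hsub]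
  have hksub : k ≤ (wsupp α ∪ wsupp β).card := Finset.card_le_card hsub
  have h2k : 2 * k = d := by omega
  have hcard3 : (wsupp α ∩ wsupp (α + β)).card = k := by
    rw [hset2]
    have h5 : (wsupp α ∩ wsupp β).card + (wsupp α \ wsupp β).card = (wsupp α).card :=
      Finset.card_inter_add_card_sdiff _ _
    omega
  -- nonvanishing
  have h2F : (2 : F) ≠ 0 := by intro h; apply h2; rw [h]; ring
  have haα0 : aα ≠ 0 := by intro h; apply h2; rw [h]; ring
  have hdF : ((d : ℕ) : F) ≠ 0 := by
    intro h; apply h2; rw [hdα, h]; ring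
  have hkF : ((k : ℕ) : F) ≠ 0 := by
    intro h
    apply hdF
    rw [← h2k]
    push_cast
    rw [h]; ring
  have h4F : (4 : F) ≠ 0 := by
    have := mul_ne_zero h2F h2F
    norm_num at this ⊢
    exact this
  -- the scalar identity
  have hlam2 : lam = ((4 : F) * aα * (k : F))⁻¹ := by
    rw [hlam, hdα, ← h2k]
    push_cast
    ring_nf
  have hscal : lam * (k : F) * aβ = aβ / (4 * aα) := by
    rw [hlam2]
    field_simp
  -- sum computation
  have key : ∀ (γ : Word n), IsStar C γ → ∀ aγ : F, (∀ i, γ i = 1 → a i γ = aγ) →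
      (∑ i ∈ wsupp α, CA.mul (CA.t i) (CA.e γ))
        = ((wsupp α ∩ wsupp γ).card : F) • aγ • CA.e γ := by
    intro γ hγ aγ haγ
    have h1 : ∀ i ∈ wsupp α, CA.mul (CA.t i) (CA.e γ)
        = if γ i = 1 then a i γ • CA.e γ else 0 := fun i _ => CA.t_mul_e i γ hγ
    rw [Finset.sum_congr rfl h1, ← Finset.sum_filter]
    have h3 : (wsupp α).filter (fun i => γ i = 1) = wsupp α ∩ wsupp γ := by
      ext i; simp [wsupp, Finset.mem_filter, Finset.mem_inter]
    rw [h3]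
    have h4 : ∀ i ∈ wsupp α ∩ wsupp γ, a i γ • CA.e γ = aγ • CA.e γ := by
      intro i hi
      rw [haγ i (by simpa [wsupp] using (Finset.mem_inter.mp hi).2)]
    rw [Finset.sum_congr rfl h4, Finset.sum_const]
    exact (Nat.cast_smul_eq_nsmul F _ _).symm
  -- compute f on basis vectors
  have hfapply : ∀ x : A, f x = lam • (∑ i ∈ wsupp α, CA.mul (CA.t i) x)
      + mu • CA.mul (CA.e α) x := by
    intro x
    rw [hf, hs]
    simp [map_add, map_smul, map_sum, LinearMap.add_apply, LinearMap.smul_apply,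
      LinearMap.sum_apply]
  have hfβ : f (CA.e β) = (aβ / (4 * aα)) • CA.e β + (mu * b α β) • CA.e (α + β) := by
    rw [hfapply, key β hβ aβ haβ,
      CA.e_mul_e α β hα hβ (fun h => hne h.symm) hnc]
    match_scalars
    · linear_combination hscal
    · ring
  have hfαβ : f (CA.e (α + β)) = (aβ / (4 * aα)) • CA.e (α + β) + (mu * b α β) • CA.e β := by
    have hmul2 : CA.mul (CA.e α) (CA.e (α + β)) = b α β • CA.e β := by
      rw [CA.e_mul_e α (α + β) hα hαβstar hααβ (by rw [hsumαβ]; exact hβ.2.2), hsumαβ, hbb]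
    rw [hfapply, key (α + β) hαβstar aβ haαβ, hcard3, hmul2]
    match_scalars
    · linear_combination hscal
    · ring
  -- nonvanishing of the eigenvectors
  have hne1 : (Sum.inr ⟨β, hβ⟩ : Fin n ⊕ {γ : Word n // IsStar C γ})
      ≠ Sum.inr ⟨α + β, hαβstar⟩ := by
    simp only [ne_eq, Sum.inr.injEq, Subtype.mk.injEq]
    exact hβαβ
  have heβ : CA.e β = CA.bas (Sum.inr ⟨β, hβ⟩) := (CA.bas_e ⟨β, hβ⟩).symm
  have heαβ : CA.e (α + β) = CA.bas (Sum.inr ⟨α + β, hαβstar⟩) := (CA.bas_e ⟨α + β, hαβstar⟩).symm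
  have hnz : ∀ c : F, CA.e β + c • CA.e (α + β) ≠ 0 := by
    intro c h
    have := congrArg CA.bas.repr h
    rw [heβ, heαβ] at this
    simp only [map_add, map_smul, Module.Basis.repr_self, map_zero] at this
    have := congrFun (congrArg DFunLike.coe this) (Sum.inr ⟨β, hβ⟩)
    simp [Finsupp.single_apply, hne1, Ne.symm hne1] at this
  constructor
  · refine ⟨Module.End.mem_eigenspace_iff.mpr ?_, ?_⟩
    · rw [map_sub, hfβ, hfαβ]
      module
    · have := hnz (-1)
      intro h; apply this
      rw [← h]; module
  · refine ⟨Module.End.mem_eigenspace_iff.mpr ?_, ?_⟩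
    · rw [map_add, hfβ, hfαβ]
      module
    · have := hnz 1
      intro h; apply this
      rw [← h]; module
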